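/- For every N ≥ 2, the intersection of the eigenspace of H0 for the eigenvalue N − 1 with the +1-eigenspace of the parity operator M is the one-dimensional span of the GHZ state ψ_d^(1) = (e(const false) + e(const true))/√2, and its intersection with the −1-eigenspace of M is the one-dimensional span of ψ_d^(2) = (e(const false) − e(const true))/√2. Precisely: {v | H0.mulVec v = (N−1) • v ∧ M.mulVec v = v} = Submodule.span ℂ {ψ_d^(1)} and {v | H0.mulVec v = (N−1) • v ∧ M.mulVec v = −v} = Submodule.span ℂ {ψ_d^(2)}. -/

import Mathlib

open Matrix

/-- `Z n`: the Pauli-Z operator acting on site `n` of the chain. -/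
noncomputable def Zop (N : ℕ) (n : Fin N) : Matrix (Fin N → Bool) (Fin N → Bool) ℂ :=
  Matrix.diagonal fun s => if s n = false then 1 else -1

/-- The nearest-neighbour Ising Hamiltonian `H0 = ∑_{n=0}^{N-2} Z_n Z_{n+1}`. -/
noncomputable def IsingH0 (N : ℕ) : Matrix (Fin N → Bool) (Fin N → Bool) ℂ :=
  ∑ n ∈ (Finset.range (N - 1)).attach,
    Zop N ⟨n.1, by have := Finset.mem_range.mp n.2; omega⟩ *
    Zop N ⟨n.1 + 1, by have := Finset.mem_range.mp n.2; omega⟩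

/-- The X-parity operator `M = ∏_n X_n`, the global spin flip. -/
noncomputable def parityM (N : ℕ) : Matrix (Fin N → Bool) (Fin N → Bool) ℂ :=
  Matrix.of fun s t => if t = (fun n => !(s n)) then 1 else 0

/-- The standard basis vector at the bit string `s`. -/
noncomputable def e {N : ℕ} (s : Fin N → Bool) : (Fin N → Bool) → ℂ :=
  Pi.single s 1

/-- The GHZ state `ψ_d^(1) = (|0⋯0⟩ + |1⋯1⟩)/√2`. -/
noncomputable def ghz1 (N : ℕ) : (Fin N → Bool) → ℂ :=
  ((Real.sqrt 2 : ℂ))⁻¹ • (e (fun _ => false) + e (fun _ => true))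

/-- The GHZ state `ψ_d^(2) = (|0⋯0⟩ − |1⋯1⟩)/√2`. -/
noncomputable def ghz2 (N : ℕ) : (Fin N → Bool) → ℂ :=
  ((Real.sqrt 2 : ℂ))⁻¹ • (e (fun _ => false) - e (fun _ => true))

/-- diagonal of H0 -/
noncomputable def Dfun (N : ℕ) (s : Fin N → Bool) : ℂ :=
  ∑ n ∈ (Finset.range (N - 1)).attach,
    (if s ⟨n.1, by have := Finset.mem_range.mp n.2; omega⟩ =
        s ⟨n.1 + 1, by have := Finset.mem_range.mp n.2; omega⟩ then (1:ℂ) else -1)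

lemma H0_mulVec (N : ℕ) (v : (Fin N → Bool) → ℂ) (s : Fin N → Bool) :
    (IsingH0 N).mulVec v s = Dfun N s * v s := by
  unfold IsingH0 Dfun
  rw [show ∀ (t : Finset {x // x ∈ Finset.range (N-1)})
      (A : {x // x ∈ Finset.range (N-1)} → Matrix (Fin N → Bool) (Fin N → Bool) ℂ),
      (∑ i ∈ t, A i).mulVec v = ∑ i ∈ t, (A i).mulVec v from
    fun t A => map_sum (Matrix.mulVec.addMonoidHomLeft v) A t]
  rw [Finset.sum_apply, Finset.sum_mul]
  refine Finset.sum_congr rfl fun n _ => ?_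
  rw [Zop, Zop, Matrix.diagonal_mul_diagonal, Matrix.mulVec_diagonal]
  congr 1
  rcases hb1 : s ⟨n.1, _⟩ <;> rcases hb2 : s ⟨n.1+1, _⟩ <;> simp [hb1, hb2]

lemma parityM_mulVec (N : ℕ) (v : (Fin N → Bool) → ℂ) (s : Fin N → Bool) :
    (parityM N).mulVec v s = v (fun n => !(s n)) := by
  simp [parityM, Matrix.mulVec, dotProduct, ite_mul]

lemma Dfun_const (N : ℕ) (hN : 2 ≤ N) (b : Bool) :
    Dfun N (fun _ => b) = (N : ℂ) - 1 := by
  unfold Dfun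
  rw [Finset.sum_congr rfl fun n _ => if_pos rfl, Finset.sum_const, Finset.card_attach,
    Finset.card_range, nsmul_eq_mul, mul_one]
  push_cast [Nat.cast_sub (by omega : 1 ≤ N)]
  ring

lemma const_of_adj (N : ℕ) (hN : 2 ≤ N) (s : Fin N → Bool)
    (h : ∀ n : {x // x ∈ Finset.range (N-1)},
      s ⟨n.1, by have := Finset.mem_range.mp n.2; omega⟩ =
      s ⟨n.1 + 1, by have := Finset.mem_range.mp n.2; omega⟩) :
    s = fun _ => s ⟨0, by omega⟩ := by
  funext i
  obtain ⟨m, hm⟩ := i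
  induction m with
  | zero => rfl
  | succ k ih =>
      have hk : k < N - 1 := by omega
      have := h ⟨k, Finset.mem_range.mpr hk⟩
      simp only at this
      rw [← this, ih (by omega)]

lemma Dfun_ne (N : ℕ) (hN : 2 ≤ N) (s : Fin N → Bool)
    (h1 : s ≠ fun _ => false) (h2 : s ≠ fun _ => true) :
    Dfun N s ≠ (N : ℂ) - 1 := by
  set t := (Finset.range (N-1)).attach
  set p : {x // x ∈ Finset.range (N-1)} → Prop := fun n =>
      s ⟨n.1, by have := Finset.mem_range.mp n.2; omega⟩ =
      s ⟨n.1 + 1, by have := Finset.mem_range.mp n.2; omega⟩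
  have hk : (t.filter fun n => ¬ p n).Nonempty := by
    by_contra hc
    rw [Finset.not_nonempty_iff_eq_empty, Finset.filter_eq_empty_iff] at hc
    have hall : ∀ n, p n := by
      intro n
      by_contra hn
      exact hc (Finset.mem_attach _ n) hn
    have := const_of_adj N hN s hall
    cases hb : s ⟨0, by omega⟩
    · exact h1 (by rw [this, hb])
    · exact h2 (by rw [this, hb])
  have hD : Dfun N s = ((t.filter fun n => p n).card : ℂ)
      - ((t.filter fun n => ¬ p n).card : ℂ) := by
    unfold Dfun
    rw [Finset.sum_ite, Finset.sum_const, Finset.sum_const, nsmul_eq_mul, nsmul_eq_mul]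
    ring
  have hcard : (t.filter fun n => p n).card + (t.filter fun n => ¬ p n).card = N - 1 := by
    rw [Finset.card_filter_add_card_filter_not, Finset.card_attach, Finset.card_range]
  intro hEq
  rw [hD] at hEq
  have hcast : (((t.filter fun n => p n).card : ℂ) + ((t.filter fun n => ¬ p n).card : ℂ))
      = (N : ℂ) - 1 := by
    rw [← Nat.cast_add, hcard]
    push_cast [Nat.cast_sub (by omega : 1 ≤ N)]; ring
  have : ((t.filter fun n => ¬ p n).card : ℂ) = 0 := by linear_combination (hcast - hEq) / 2
  rw [Nat.cast_eq_zero, Finset.card_eq_zero, ← Finset.not_nonempty_iff_eq_empty] at this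
  exact this hk

lemma const_ne (N : ℕ) (hN : 2 ≤ N) : (fun _ : Fin N => false) ≠ fun _ => true := by
  intro h
  have := congrFun h ⟨0, by omega⟩
  simp at this

lemma flip_const (N : ℕ) (b : Bool) :
    (fun n : Fin N => !((fun _ : Fin N => b) n)) = fun _ => !b := rfl

lemma flip_eq_const (N : ℕ) (s : Fin N → Bool) (b : Bool) :
    ((fun n => !(s n)) = fun _ : Fin N => b) ↔ s = fun _ => !b := by
  simp only [funext_iff]
  constructor <;> intro h n <;> have := h n <;> revert this <;>
    cases hs : s n <;> cases b <;> simp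

lemma sqrt2_ne : ((Real.sqrt 2 : ℂ)) ≠ 0 := by
  simp only [ne_eq, Complex.ofReal_eq_zero]
  positivity

-- ghz values
lemma ghz1_apply (N : ℕ) (s : Fin N → Bool) :
    ghz1 N s = ((Real.sqrt 2 : ℂ))⁻¹ *
      ((if s = fun _ => false then 1 else 0) + (if s = fun _ => true then 1 else 0)) := by
  simp only [ghz1, e, Pi.smul_apply, Pi.add_apply, smul_eq_mul]
  congr 1
  congr 1 <;> rw [Pi.single_apply]

lemma ghz2_apply (N : ℕ) (s : Fin N → Bool) :
    ghz2 N s = ((Real.sqrt 2 : ℂ))⁻¹ *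
      ((if s = fun _ => false then 1 else 0) - (if s = fun _ => true then 1 else 0)) := by
  simp only [ghz2, e, Pi.smul_apply, Pi.sub_apply, smul_eq_mul]
  congr 1
  congr 1 <;> rw [Pi.single_apply]

/-- For every `N ≥ 2`, the intersection of the top eigenspace of `H0` (eigenvalue `N − 1`)
with the `+1`-eigenspace of the parity operator `M` is the one-dimensional span of
`ψ_d^(1)`, and its intersection with the `−1`-eigenspace of `M` is the one-dimensional
span of `ψ_d^(2)`. -/

theorem ghz_unique_in_parity_sector (N : ℕ) (hN : 2 ≤ N) :
    ({v : (Fin N → Bool) → ℂ |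
        (IsingH0 N).mulVec v = ((N : ℂ) - 1) • v ∧ (parityM N).mulVec v = v} =
      (Submodule.span ℂ ({ghz1 N} : Set ((Fin N → Bool) → ℂ)) :
        Set ((Fin N → Bool) → ℂ))) ∧
    ({v : (Fin N → Bool) → ℂ |
        (IsingH0 N).mulVec v = ((N : ℂ) - 1) • v ∧ (parityM N).mulVec v = -v} =
      (Submodule.span ℂ ({ghz2 N} : Set ((Fin N → Bool) → ℂ)) :
        Set ((Fin N → Bool) → ℂ))) := by
  have hne := const_ne N hN
  have key : ∀ (g : (Fin N → Bool) → ℂ) (σ : ℂ),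
      (∀ s, g s = ((Real.sqrt 2 : ℂ))⁻¹ *
        ((if s = fun _ => false then 1 else 0) + σ * (if s = fun _ => true then 1 else 0))) →
      σ * σ = 1 →
      ({v : (Fin N → Bool) → ℂ |
        (IsingH0 N).mulVec v = ((N : ℂ) - 1) • v ∧ (parityM N).mulVec v = σ • v} =
      (Submodule.span ℂ ({g} : Set ((Fin N → Bool) → ℂ)) : Set ((Fin N → Bool) → ℂ))) := by
    intro g σ hg hσ
    ext v
    simp only [Set.mem_setOf_eq, SetLike.mem_coe, Submodule.mem_span_singleton]
    constructor
    · rintro ⟨hH, hM⟩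
      refine ⟨(Real.sqrt 2 : ℂ) * v (fun _ => false), ?_⟩
      have hvz : ∀ s, s ≠ (fun _ => false) → s ≠ (fun _ => true) → v s = 0 := by
        intro s h1 h2
        have h := congrFun hH s
        rw [H0_mulVec, Pi.smul_apply, smul_eq_mul] at h
        have hD := Dfun_ne N hN s h1 h2
        have : (Dfun N s - ((N:ℂ) - 1)) * v s = 0 := by rw [sub_mul, h]; ring
        rcases mul_eq_zero.mp this with h' | h'
        · exact absurd (by linear_combination h') hD
        · exact h'
      have hvt : v (fun _ => true) = σ * v (fun _ => false) := by
        have h := congrFun hM (fun _ => false)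
        rw [parityM_mulVec, Pi.smul_apply, smul_eq_mul] at h
        rw [flip_const] at h
        simpa using h
      funext s
      rw [Pi.smul_apply, smul_eq_mul, hg s]
      by_cases h1 : s = fun _ => false
      · subst h1
        rw [if_pos rfl, if_neg hne]
        field_simp [sqrt2_ne]
        ring
      · by_cases h2 : s = fun _ => true
        · subst h2
          rw [if_neg (fun h => hne h.symm), if_pos rfl, hvt]
          field_simp [sqrt2_ne]
          ring
        · rw [if_neg h1, if_neg h2, hvz s h1 h2]; ring
    · rintro ⟨c, rfl⟩
      constructor
      · rw [Matrix.mulVec_smul]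
        funext s
        simp only [Pi.smul_apply, smul_eq_mul]
        rw [H0_mulVec, hg s]
        by_cases h1 : s = fun _ => false
        · subst h1
          rw [Dfun_const N hN]; ring
        · by_cases h2 : s = fun _ => true
          · subst h2
            rw [Dfun_const N hN]; ring
          · rw [if_neg h1, if_neg h2]
            ring
      · funext s
        rw [Matrix.mulVec_smul]
        simp only [Pi.smul_apply, smul_eq_mul]
        rw [parityM_mulVec, hg, hg s]
        simp only [flip_eq_const, Bool.not_false, Bool.not_true]
        by_cases h1 : s = fun _ => false
        · subst h1
          rw [if_neg hne, if_pos rfl]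
          ring
        · by_cases h2 : s = fun _ => true
          · subst h2
            rw [if_pos rfl, if_neg (fun h => hne h.symm)]
            linear_combination (-(c * ((Real.sqrt 2 : ℂ))⁻¹)) * hσ
          · rw [if_neg h1, if_neg h2]
            ring
  constructor
  · have := key (ghz1 N) 1 (by intro s; rw [ghz1_apply]; ring) (by ring)
    simpa using this
  · have := key (ghz2 N) (-1) (by intro s; rw [ghz2_apply]; ring) (by ring)
    simpa using this
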